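/- For every fixed f ∈ A_r, the function z ↦ |f|_z is continuous on the closed disk {z ∈ ℂ : |z| ≤ r}. In particular, for f ≠ 0 one has |f|_z = |f(z)|^{log r / log |z|} → r^{ord_0(f)} = |f|_0 as z → 0. -/

import Mathlib

open scoped Classical
open Topology Filter

/-- The hybrid norm on `ℂ`: `‖z‖_hyb = max {1, |z|}` for `z ≠ 0`, and `‖0‖_hyb = 0`. -/
noncomputable def hybNorm (z : ℂ) : ℝ := if z = 0 then 0 else max 1 (‖z‖)

/-- `f ∈ A_r`:  a formal Laurent series `f = Σ aₙ tⁿ ∈ ℂ((t))` belongs to `A_r` when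
`Σₙ ‖aₙ‖_hyb rⁿ < ∞`. -/
def memAr (r : ℝ) (f : LaurentSeries ℂ) : Prop :=
  Summable (fun n : ℤ => hybNorm (f.coeff n) * r ^ n)

/-- The evaluation `ev_z(f) = f(z) = Σₙ aₙ zⁿ` of a formal Laurent series at `z ≠ 0`. -/
noncomputable def evalAr (z : ℂ) (f : LaurentSeries ℂ) : ℂ :=
  ∑' n : ℤ, f.coeff n * z ^ n

/-- The seminorm `|·|_z` on `A_r` for `z` in the closed disk of radius `r`:
`|f|_z = |f(z)| ^ (log r / log |z|)` for `0 < |z| ≤ r`, and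
`|f|₀ = r^(ord₀ f)` for `f ≠ 0`, `|0|₀ = 0` at `z = 0`. -/
noncomputable def seminormAt (r : ℝ) (z : ℂ) (f : LaurentSeries ℂ) : ℝ :=
  if z = 0 then (if f = 0 then 0 else r ^ (HahnSeries.order f))
  else (‖evalAr z f‖) ^ (Real.log r / Real.log (‖z‖))

lemma hybNorm_nonneg (z : ℂ) : 0 ≤ hybNorm z := by
  unfold hybNorm; split
  · exact le_refl 0
  · exact le_trans zero_le_one (le_max_left _ _)

lemma abs_le_hybNorm (z : ℂ) : ‖z‖ ≤ hybNorm z := by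
  unfold hybNorm; split
  · simp [*]
  · exact le_max_right _ _

lemma zpow_le_of_nonneg {x y : ℝ} (hx : 0 ≤ x) (hxy : x ≤ y) {n : ℤ} (hn : 0 ≤ n) :
    x ^ n ≤ y ^ n := by
  obtain ⟨m, rfl⟩ := Int.eq_ofNat_of_zero_le hn
  rw [zpow_natCast, zpow_natCast]
  exact pow_le_pow_left₀ hx hxy m

lemma zpow_le_of_neg {x y : ℝ} (hx : 0 < x) (hxy : x ≤ y) {n : ℤ} (hn : n < 0) :
    y ^ n ≤ x ^ n := by
  obtain ⟨m, rfl⟩ : ∃ m : ℕ, n = -((m : ℤ) + 1) := ⟨(-n - 1).toNat, by omega⟩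
  rw [zpow_neg, zpow_neg]
  apply inv_anti₀ (zpow_pos hx _)
  exact zpow_le_of_nonneg hx.le hxy (by positivity)

lemma summable_hyb {r : ℝ} {f : LaurentSeries ℂ} (hf : memAr r f)
    {ε : ℝ} (hε0 : 0 < ε) (hεr : ε ≤ r) :
    Summable (fun n : ℤ => hybNorm (f.coeff n) * ε ^ n) := by
  apply Summable.of_norm_bounded_eventually hf
  have hfin : {n : ℤ | n < 0 ∧ f.coeff n ≠ 0}.Finite := by
    by_cases hf0 : f = 0
    · simp [hf0]
    · apply (Set.finite_Ico f.order 0).subset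
      rintro n ⟨hn, hc⟩
      exact ⟨HahnSeries.order_le_of_coeff_ne_zero hc, hn⟩
  filter_upwards [hfin.eventually_cofinite_notMem] with n hn
  rw [Real.norm_of_nonneg (mul_nonneg (hybNorm_nonneg _) (zpow_pos hε0 n).le)]
  by_cases hc : f.coeff n = 0
  · simp [hc, hybNorm]
  · have hn0 : 0 ≤ n := not_lt.mp (fun h => hn ⟨h, hc⟩)
    exact mul_le_mul_of_nonneg_left (zpow_le_of_nonneg hε0.le hεr hn0) (hybNorm_nonneg _)

lemma evalAr_continuousOn {r : ℝ} (hr0 : 0 < r) {f : LaurentSeries ℂ} (hf : memAr r f)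
    {ε : ℝ} (hε0 : 0 < ε) (hεr : ε ≤ r) :
    ContinuousOn (fun z : ℂ => evalAr z f)
      {z : ℂ | ε ≤ ‖z‖ ∧ ‖z‖ ≤ r} := by
  have hsub : {z : ℂ | ε ≤ ‖z‖ ∧ ‖z‖ ≤ r} ⊆ {(0 : ℂ)}ᶜ := by
    intro z hz
    simp only [Set.mem_compl_iff, Set.mem_singleton_iff]
    intro h
    rw [h] at hz
    simp at hz
    linarith [hz.1]
  apply continuousOn_tsum
    (u := fun n : ℤ => hybNorm (f.coeff n) * r ^ n + hybNorm (f.coeff n) * ε ^ n)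
  · intro n
    exact continuousOn_const.mul ((continuousOn_zpow₀ n).mono hsub)
  · exact hf.add (summable_hyb hf hε0 hεr)
  · intro n z hz
    obtain ⟨hz1, hz2⟩ := hz
    have hzpos : 0 < ‖z‖ := lt_of_lt_of_le hε0 hz1
    rw [norm_mul, norm_zpow]
    rcases le_or_gt 0 n with hn | hn
    · calc ‖f.coeff n‖ * ‖z‖ ^ n
          ≤ hybNorm (f.coeff n) * r ^ n := by
            apply mul_le_mul (abs_le_hybNorm _) (zpow_le_of_nonneg (norm_nonneg z) hz2 hn)
              (zpow_pos hzpos n).le (hybNorm_nonneg _)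
        _ ≤ _ := le_add_of_nonneg_right (mul_nonneg (hybNorm_nonneg _) (zpow_pos hε0 n).le)
    · calc ‖f.coeff n‖ * ‖z‖ ^ n
          ≤ hybNorm (f.coeff n) * ε ^ n := by
            apply mul_le_mul (abs_le_hybNorm _) (zpow_le_of_neg hε0 hz1 hn)
              (zpow_pos hzpos n).le (hybNorm_nonneg _)
        _ ≤ _ := le_add_of_nonneg_left (mul_nonneg (hybNorm_nonneg _) (zpow_pos hr0 n).le)

noncomputable def tailFun (f : LaurentSeries ℂ) (N : ℤ) (z : ℂ) : ℂ :=
  ∑' m : ℕ, f.coeff (N + m) * z ^ m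

lemma tailFun_continuousOn {r : ℝ} (hr0 : 0 < r) {f : LaurentSeries ℂ} (hf : memAr r f)
    (N : ℤ) : ContinuousOn (tailFun f N) {z : ℂ | ‖z‖ ≤ r} := by
  apply continuousOn_tsum
    (u := fun m : ℕ => (hybNorm (f.coeff (N + m)) * r ^ ((N : ℤ) + m)) * r ^ (-N))
  · intro m
    exact continuousOn_const.mul (continuousOn_pow m)
  · apply Summable.mul_right
    exact hf.comp_injective (fun a b hab => by simpa using hab)
  · intro m z hz
    have : (hybNorm (f.coeff (N + m)) * r ^ ((N : ℤ) + m)) * r ^ (-N)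
        = hybNorm (f.coeff (N + m)) * r ^ (m : ℕ) := by
      rw [zpow_add₀ hr0.ne', zpow_neg, zpow_natCast]
      field_simp
    rw [this, norm_mul, norm_pow]
    exact mul_le_mul (abs_le_hybNorm _) (pow_le_pow_left₀ (norm_nonneg z) hz m)
      (pow_nonneg (norm_nonneg z) m) (hybNorm_nonneg _)

lemma tailFun_zero (f : LaurentSeries ℂ) (N : ℤ) : tailFun f N 0 = f.coeff N := by
  unfold tailFun
  rw [tsum_eq_single 0]
  · simp
  · intro m hm
    simp [zero_pow hm]

lemma eval_factor {f : LaurentSeries ℂ} (hf0 : f ≠ 0) {z : ℂ} (hz : z ≠ 0) :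
    evalAr z f = z ^ (f.order) * tailFun f f.order z := by
  unfold evalAr tailFun
  rw [← tsum_mul_left]
  have hinj : Function.Injective (fun m : ℕ => f.order + (m : ℤ)) := by
    intro a b hab; simpa using hab
  have hsupp : Function.support (fun n : ℤ => f.coeff n * z ^ n)
      ⊆ Set.range (fun m : ℕ => f.order + (m : ℤ)) := by
    intro n hn
    have hc : f.coeff n ≠ 0 := by
      intro h; apply hn; simp [h]
    have hle := HahnSeries.order_le_of_coeff_ne_zero hc
    refine ⟨(n - f.order).toNat, ?_⟩
    show f.order + (((n - f.order).toNat : ℕ) : ℤ) = n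
    omega
  rw [← Function.Injective.tsum_eq hinj hsupp]
  apply tsum_congr
  intro m
  show f.coeff (f.order + m) * z ^ ((f.order : ℤ) + m) = z ^ f.order * (f.coeff (f.order + m) * z ^ m)
  rw [zpow_add₀ hz, zpow_natCast]
  ring

/-- For every fixed `f ∈ A_r`, the function `z ↦ |f|_z` is continuous on the closed disk
`{z : |z| ≤ r}`.  In particular, for `f ≠ 0` one has
`|f|_z = |f(z)|^(log r / log |z|) → r^(ord₀ f) = |f|₀` as `z → 0`. -/
theorem seminormAt_continuousOn (r : ℝ) (hr0 : 0 < r) (hr1 : r < 1)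
    (f : LaurentSeries ℂ) (hf : memAr r f) :
    ContinuousOn (fun z : ℂ => seminormAt r z f) {z : ℂ | ‖z‖ ≤ r} := by
  have hlogr : Real.log r < 0 := Real.log_neg hr0 hr1
  by_cases hf0 : f = 0
  · subst hf0
    apply (continuousOn_const (c := (0 : ℝ))).congr
    intro z hz
    by_cases hz0 : z = 0
    · simp [seminormAt, hz0]
    · have habs : 0 < ‖z‖ := norm_pos_iff.mpr hz0
      have hlogz : Real.log (‖z‖) < 0 := Real.log_neg habs (lt_of_le_of_lt hz hr1)
      have hexp : Real.log r / Real.log (‖z‖) ≠ 0 :=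
        div_ne_zero hlogr.ne hlogz.ne
      have hev : evalAr z 0 = 0 := by simp [evalAr]
      simp [seminormAt, hz0, hev, Real.zero_rpow hexp]
  · intro z₀ hz₀
    by_cases hz0 : z₀ = 0
    · subst hz0
      rw [← continuousWithinAt_diff_self]
      set N := f.order with hN
      set s' := {z : ℂ | ‖z‖ ≤ r} \ {0} with hs'
      have hval : seminormAt r 0 f = r ^ N := by simp [seminormAt, hf0, hN]
      have hmemz : ∀ z ∈ s', z ≠ 0 ∧ ‖z‖ ≤ r := by
        rintro z ⟨h1, h2⟩
        exact ⟨by simpa using h2, h1⟩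
      show Filter.Tendsto (fun z => seminormAt r z f) (nhdsWithin 0 s') (𝓝 (seminormAt r 0 f))
      rw [hval]
      set l := nhdsWithin (0 : ℂ) s' with hl
      have hev_mem : ∀ᶠ z in l, z ∈ s' := self_mem_nhdsWithin
      -- tail tends to coeff N ≠ 0
      have hcN : f.coeff N ≠ 0 := HahnSeries.coeff_order_eq_zero.not.mpr hf0
      have htail : Filter.Tendsto (fun z => tailFun f N z) l (𝓝 (f.coeff N)) := by
        have h0mem : (0 : ℂ) ∈ {z : ℂ | ‖z‖ ≤ r} := by simp [hr0.le]
        have := (tailFun_continuousOn hr0 hf N).continuousWithinAt h0mem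
        rw [ContinuousWithinAt, tailFun_zero] at this
        exact this.mono_left (nhdsWithin_mono _ Set.diff_subset)
      have htne : ∀ᶠ z in l, tailFun f N z ≠ 0 := htail.eventually_ne hcN
      -- exponent tends to 0
      have habs0 : Filter.Tendsto (fun z : ℂ => ‖z‖) l (nhdsWithin 0 {0}ᶜ) := by
        apply tendsto_nhdsWithin_of_tendsto_nhds_of_eventually_within
        · have : Filter.Tendsto (fun z : ℂ => ‖z‖) (𝓝 0) (𝓝 0) := by
            simpa using (continuous_norm (E := ℂ)).tendsto 0
          exact this.mono_left nhdsWithin_le_nhds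
        · filter_upwards [hev_mem] with z hz
          simpa using (hmemz z hz).1
      have hlog : Filter.Tendsto (fun z : ℂ => Real.log (‖z‖)) l Filter.atBot :=
        Real.tendsto_log_nhdsNE_zero.comp habs0
      have hLinv : Filter.Tendsto (fun z : ℂ => (Real.log (‖z‖))⁻¹) l (𝓝 0) := by
        have h1 : Filter.Tendsto (fun z : ℂ => -Real.log (‖z‖)) l Filter.atTop :=
          Filter.tendsto_neg_atBot_atTop.comp hlog
        have h2 := h1.inv_tendsto_atTop
        have h3 : Filter.Tendsto (fun z : ℂ => -(-Real.log (‖z‖))⁻¹) l (𝓝 (-0)) :=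
          h2.neg
        simpa [inv_neg] using h3
      have hL : Filter.Tendsto (fun z : ℂ => Real.log r / Real.log (‖z‖)) l (𝓝 0) := by
        have := hLinv.const_mul (Real.log r)
        simp only [mul_zero] at this
        exact this.congr (fun z => (div_eq_mul_inv _ _).symm)
      -- eventual formula
      have hformula : ∀ᶠ z in l, seminormAt r z f
          = r ^ N * (‖tailFun f N z‖) ^ (Real.log r / Real.log (‖z‖)) := by
        filter_upwards [hev_mem, htne] with z hz htz
        obtain ⟨hzne, hzr⟩ := hmemz z hz
        have hza : 0 < ‖z‖ := norm_pos_iff.mpr hzne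
        have hlogz : Real.log (‖z‖) < 0 := Real.log_neg hza (lt_of_le_of_lt hzr hr1)
        set L := Real.log r / Real.log (‖z‖) with hLdef
        have h1 : seminormAt r z f = (‖evalAr z f‖) ^ L := by
          simp [seminormAt, hzne, hLdef]
        rw [h1, eval_factor hf0 hzne, norm_mul, norm_zpow]
        rw [Real.mul_rpow (zpow_pos hza N).le (norm_nonneg _)]
        congr 1
        -- (|z| ^ N) ^ L = r ^ N
        rw [← Real.rpow_intCast (‖z‖) N, ← Real.rpow_mul hza.le]
        rw [Real.rpow_def_of_pos hza]
        have hcalc : Real.log (‖z‖) * ((N : ℝ) * L)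
            = Real.log r * (N : ℝ) := by
          rw [hLdef, mul_comm, mul_assoc, div_mul_cancel₀ _ hlogz.ne]
          ring
        rw [hcalc, ← Real.rpow_def_of_pos hr0, Real.rpow_intCast]
      -- limit of RHS
      have htail_abs : Filter.Tendsto (fun z => ‖tailFun f N z‖) l
          (𝓝 (‖f.coeff N‖)) :=
        (continuous_norm.tendsto _).comp htail
      have hterm : Filter.Tendsto
          (fun z : ℂ => (‖tailFun f N z‖) ^ (Real.log r / Real.log (‖z‖)))
          l (𝓝 1) := by
        have := htail_abs.rpow hL (Or.inl (norm_ne_zero_iff.mpr hcN))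
        simpa using this
      have := hterm.const_mul (r ^ N : ℝ)
      simp only [mul_one] at this
      exact Filter.Tendsto.congr' (hformula.mono fun z h => h.symm) this
    · -- z₀ ≠ 0
      have habs : 0 < ‖z₀‖ := norm_pos_iff.mpr hz0
      set ε := ‖z₀‖ / 2 with hε
      have hε0 : 0 < ε := by positivity
      have hz₀r : ‖z₀‖ ≤ r := hz₀
      have hεr : ε ≤ r := by rw [hε]; linarith
      have hmem : z₀ ∈ {z : ℂ | ε ≤ ‖z‖ ∧ ‖z‖ ≤ r} :=
        ⟨by rw [hε]; linarith, hz₀r⟩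
      have hlogz₀ : Real.log (‖z₀‖) < 0 := Real.log_neg habs (lt_of_le_of_lt hz₀r hr1)
      have hcw : ContinuousWithinAt
          (fun z : ℂ => (‖evalAr z f‖) ^ (Real.log r / Real.log (‖z‖)))
          {z : ℂ | ε ≤ ‖z‖ ∧ ‖z‖ ≤ r} z₀ := by
        apply ContinuousWithinAt.rpow
        · exact (continuous_norm.continuousAt).comp_continuousWithinAt
            ((evalAr_continuousOn hr0 hf hε0 hεr).continuousWithinAt hmem)
        · apply ContinuousWithinAt.div continuousWithinAt_const
          · exact ((Real.continuousAt_log habs.ne').comp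
              continuous_norm.continuousAt).continuousWithinAt
          · exact hlogz₀.ne
        · exact Or.inr (div_pos_of_neg_of_neg hlogr hlogz₀)
      rw [← continuousWithinAt_inter (Metric.ball_mem_nhds z₀ hε0)]
      have hsub : {z : ℂ | ‖z‖ ≤ r} ∩ Metric.ball z₀ ε
          ⊆ {z : ℂ | ε ≤ ‖z‖ ∧ ‖z‖ ≤ r} := by
        rintro z ⟨hz1, hz2⟩
        refine ⟨?_, hz1⟩
        have hd : ‖z - z₀‖ < ε := by
          rw [Metric.mem_ball, Complex.dist_eq] at hz2; exact hz2
        have h3 : ‖z₀‖ ≤ ‖z‖ + ‖z₀ - z‖ := by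
          calc ‖z₀‖ = ‖z + (z₀ - z)‖ := by ring_nf
            _ ≤ _ := norm_add_le _ _
        have h4 : ‖z₀ - z‖ = ‖z - z₀‖ := norm_sub_rev z₀ z
        rw [hε]
        rw [hε] at hd
        linarith
      have hz0' : ∀ z ∈ {z : ℂ | ε ≤ ‖z‖ ∧ ‖z‖ ≤ r}, z ≠ 0 := by
        rintro z ⟨h1, _⟩ hz
        rw [hz] at h1
        simp at h1
        linarith
      apply ((hcw.mono hsub)).congr
      · intro z hz
        simp [seminormAt, hz0' z (hsub hz)]
      · simp [seminormAt, hz0]
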